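/- Let n, q be positive integers, let W ∈ ℝ^{n×n} be symmetric positive definite, let S ∈ ℝ^{n×q} have linearly independent columns, and let R ∈ ℝ^{n×n} be symmetric. Define P := S(SᵀWS)⁻¹Sᵀ and E := W·P·R·(I − P·W) + R·P·W. Then E is the unique minimizer of the weighted Frobenius norm objective E' ↦ Tr(W⁻¹E'W⁻¹(E')ᵀ) over all symmetric matrices E' ∈ ℝ^{n×n} satisfying E'·S = R·S; i.e., for every symmetric E' with E'·S = R·S one has Tr(W⁻¹EW⁻¹Eᵀ) ≤ Tr(W⁻¹E'W⁻¹(E')ᵀ), with equality only if E' = E. -/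

import Mathlib

open Matrix

/-- The projection-type matrix `P(S,W) := S (Sᵀ W S)⁻¹ Sᵀ`. -/
noncomputable def projMat {n q : ℕ} (S : Matrix (Fin n) (Fin q) ℝ)
    (W : Matrix (Fin n) (Fin n) ℝ) : Matrix (Fin n) (Fin n) ℝ :=
  S * (Sᵀ * W * S)⁻¹ * Sᵀ

lemma conjT_eq_T {m k : Type*} (A : Matrix m k ℝ) : Aᴴ = Aᵀ := by
  ext i j; simp [conjTranspose_apply]

lemma trace_S_zero {n q : ℕ} (S : Matrix (Fin n) (Fin q) ℝ) (X : Matrix (Fin q) (Fin n) ℝ)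
    {D : Matrix (Fin n) (Fin n) ℝ} (hDS : D * S = 0) : trace (S * (X * D)) = 0 := by
  rw [trace_mul_comm, Matrix.mul_assoc, hDS, Matrix.mul_zero, trace_zero]

lemma trace_mul_transpose_nonneg {n : ℕ} (M : Matrix (Fin n) (Fin n) ℝ) :
    0 ≤ trace (M * Mᵀ) := by
  simp only [Matrix.trace, Matrix.diag, Matrix.mul_apply, Matrix.transpose_apply]
  exact Finset.sum_nonneg fun i _ => Finset.sum_nonneg fun j _ => mul_self_nonneg _

lemma trace_mul_transpose_eq_zero {n : ℕ} {M : Matrix (Fin n) (Fin n) ℝ}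
    (h : trace (M * Mᵀ) = 0) : M = 0 := by
  simp only [Matrix.trace, Matrix.diag, Matrix.mul_apply, Matrix.transpose_apply] at h
  ext i j
  have h1 := (Finset.sum_eq_zero_iff_of_nonneg
    (fun i _ => Finset.sum_nonneg fun j _ => mul_self_nonneg (M i j))).mp h i (Finset.mem_univ i)
  have h2 := (Finset.sum_eq_zero_iff_of_nonneg
    (fun j _ => mul_self_nonneg (M i j))).mp h1 j (Finset.mem_univ j)
  simpa using mul_self_eq_zero.mp h2

lemma posdef_trace_key {n : ℕ} {V : Matrix (Fin n) (Fin n) ℝ} (hV : V.PosDef)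
    (D : Matrix (Fin n) (Fin n) ℝ) :
    0 ≤ trace (V * D * V * Dᵀ) ∧ (trace (V * D * V * Dᵀ) = 0 → D = 0) := by
  open scoped MatrixOrder in
  obtain ⟨B, hBB, hBs, hBdet⟩ :
      ∃ B : Matrix (Fin n) (Fin n) ℝ, B * B = V ∧ Bᵀ = B ∧ IsUnit B.det := by
    refine ⟨CFC.sqrt V, CFC.sqrt_mul_sqrt_self V hV.posSemidef.nonneg, ?_, ?_⟩
    · rw [← conjT_eq_T]; exact (CFC.sqrt_nonneg V).posSemidef.isHermitian
    · have hVdet : V.det ≠ 0 := hV.det_pos.ne'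
      rw [← CFC.sqrt_mul_sqrt_self V hV.posSemidef.nonneg, Matrix.det_mul] at hVdet
      exact isUnit_iff_ne_zero.mpr fun h => hVdet (by rw [h, mul_zero])
  have key : trace (V * D * V * Dᵀ) = trace ((B * D * B) * (B * D * B)ᵀ) := by
    rw [← hBB, Matrix.transpose_mul, Matrix.transpose_mul, hBs]
    rw [show B * B * D * (B * B) * Dᵀ = B * (B * D * (B * (B * Dᵀ))) by
      simp only [Matrix.mul_assoc]]
    rw [trace_mul_comm]
    congr 1
    simp only [Matrix.mul_assoc]
  constructor
  · rw [key]; exact trace_mul_transpose_nonneg _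
  · intro h
    rw [key] at h
    have hM := trace_mul_transpose_eq_zero h
    have hid : B⁻¹ * (B * D * B) * B⁻¹ = D := by
      rw [Matrix.mul_assoc B D B, Matrix.nonsing_inv_mul_cancel_left _ _ hBdet,
        Matrix.mul_assoc, Matrix.mul_nonsing_inv _ hBdet, Matrix.mul_one]
    rw [← hid, hM, Matrix.mul_zero, Matrix.zero_mul]

lemma SWS_posdef {n q : ℕ} {W : Matrix (Fin n) (Fin n) ℝ} (hW : W.PosDef)
    {S : Matrix (Fin n) (Fin q) ℝ}
    (hS : LinearIndependent ℝ (fun j : Fin q => Sᵀ j)) :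
    (Sᵀ * W * S).PosDef := by
  have hWs : Wᵀ = W := by rw [← conjT_eq_T]; exact hW.isHermitian
  refine Matrix.PosDef.of_dotProduct_mulVec_pos ?_ ?_
  · show (Sᵀ * W * S)ᴴ = _
    rw [conjT_eq_T, Matrix.transpose_mul, Matrix.transpose_mul, transpose_transpose, hWs,
      Matrix.mul_assoc]
  · intro x hx
    have hSx : S *ᵥ x ≠ 0 := by
      intro h0
      apply hx
      funext j
      refine Fintype.linearIndependent_iff.mp hS x ?_ j
      ext i
      simpa [Matrix.mulVec, dotProduct, mul_comm] using congrFun h0 i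
    have := hW.dotProduct_mulVec_pos hSx
    simpa [star_trivial, ← Matrix.mulVec_mulVec, dotProduct_mulVec,
      Matrix.vecMul_transpose] using this

theorem stmt1 {n q : ℕ} (hn : 0 < n) (hq : 0 < q)
    (W : Matrix (Fin n) (Fin n) ℝ) (hW : W.PosDef)
    (S : Matrix (Fin n) (Fin q) ℝ)
    (hS : LinearIndependent ℝ (fun j : Fin q => Sᵀ j))
    (R : Matrix (Fin n) (Fin n) ℝ) (hR : R.IsSymm) :
    ∀ E' : Matrix (Fin n) (Fin n) ℝ, E'.IsSymm → E' * S = R * S →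
      (trace (W⁻¹ * (W * projMat S W * R * (1 - projMat S W * W) + R * projMat S W * W) * W⁻¹ *
          (W * projMat S W * R * (1 - projMat S W * W) + R * projMat S W * W)ᵀ)
        ≤ trace (W⁻¹ * E' * W⁻¹ * E'ᵀ)) ∧
      (trace (W⁻¹ * (W * projMat S W * R * (1 - projMat S W * W) + R * projMat S W * W) * W⁻¹ *
          (W * projMat S W * R * (1 - projMat S W * W) + R * projMat S W * W)ᵀ)
        = trace (W⁻¹ * E' * W⁻¹ * E'ᵀ) →
        E' = W * projMat S W * R * (1 - projMat S W * W) + R * projMat S W * W) := by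
  intro E' hE'sym hE'S
  have hWs : Wᵀ = W := by rw [← conjT_eq_T]; exact hW.isHermitian
  have hWdet : IsUnit W.det := hW.det_pos.ne'.isUnit
  have hSWS := SWS_posdef hW hS
  have hAdet : IsUnit (Sᵀ * W * S).det := hSWS.det_pos.ne'.isUnit
  have hSWSs : (Sᵀ * W * S)ᵀ = Sᵀ * W * S := by
    rw [Matrix.transpose_mul, Matrix.transpose_mul, transpose_transpose, hWs, Matrix.mul_assoc]
  have hAs : ((Sᵀ * W * S)⁻¹)ᵀ = (Sᵀ * W * S)⁻¹ := by
    rw [Matrix.transpose_nonsing_inv, hSWSs]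
  set P := projMat S W with hPdef
  set E := W * P * R * (1 - P * W) + R * P * W with hEdef
  have hPs : Pᵀ = P := by
    rw [hPdef, projMat, Matrix.transpose_mul, Matrix.transpose_mul, transpose_transpose, hAs]
    simp only [Matrix.mul_assoc]
  have hPWS : P * (W * S) = S := by
    rw [hPdef, projMat]
    rw [show S * (Sᵀ * W * S)⁻¹ * Sᵀ * (W * S) = S * ((Sᵀ * W * S)⁻¹ * (Sᵀ * W * S)) by
      simp only [Matrix.mul_assoc]]
    rw [Matrix.nonsing_inv_mul _ hAdet, Matrix.mul_one]
  have hES : E * S = R * S := by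
    rw [hEdef]
    simp only [Matrix.add_mul, Matrix.sub_mul, Matrix.mul_sub, Matrix.mul_one,
      Matrix.mul_assoc, hPWS]
    abel
  have hRs : Rᵀ = R := hR
  have hEsym : Eᵀ = E := by
    rw [hEdef]
    simp only [Matrix.transpose_add, Matrix.transpose_mul, Matrix.transpose_sub,
      Matrix.transpose_one, hPs, hWs, hRs, Matrix.sub_mul, Matrix.mul_sub,
      Matrix.one_mul, Matrix.mul_one, Matrix.add_mul, Matrix.mul_add, Matrix.mul_assoc]
    abel
  set D := E' - E with hDdef
  have hDS : D * S = 0 := by rw [hDdef, Matrix.sub_mul, hE'S, hES, sub_self]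
  have hE'symm : E'ᵀ = E' := hE'sym
  have hDsym : Dᵀ = D := by rw [hDdef, Matrix.transpose_sub, hE'symm, hEsym]
  have hSD : Sᵀ * D = 0 := by
    have := congrArg Matrix.transpose hDS
    rwa [Matrix.transpose_mul, hDsym, Matrix.transpose_zero] at this
  have h1 : ∀ X : Matrix (Fin n) (Fin n) ℝ, W⁻¹ * (W * X) = X := fun X =>
    Matrix.nonsing_inv_mul_cancel_left W X hWdet
  have h2 : ∀ X : Matrix (Fin n) (Fin n) ℝ, W * (W⁻¹ * X) = X := fun X =>
    Matrix.mul_nonsing_inv_cancel_left W X hWdet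
  have hsplit : W⁻¹ * E * W⁻¹ * D =
      P * (R * (W⁻¹ * D)) - P * (R * (P * D)) + W⁻¹ * (R * (P * D)) := by
    rw [hEdef]
    simp only [Matrix.mul_add, Matrix.add_mul, Matrix.mul_sub, Matrix.sub_mul,
      Matrix.mul_one, Matrix.one_mul, Matrix.mul_assoc, h1, h2]
  have t1 : trace (P * (R * (W⁻¹ * D))) = 0 := by
    rw [show P * (R * (W⁻¹ * D)) = S * (((Sᵀ * W * S)⁻¹ * (Sᵀ * (R * W⁻¹))) * D) by
      rw [hPdef, projMat]; simp only [Matrix.mul_assoc]]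
    exact trace_S_zero S _ hDS
  have t2 : trace (P * (R * (P * D))) = 0 := by
    rw [show P * (R * (P * D)) =
        S * (((Sᵀ * W * S)⁻¹ * (Sᵀ * (R * (S * ((Sᵀ * W * S)⁻¹ * Sᵀ))))) * D) by
      rw [hPdef, projMat]; simp only [Matrix.mul_assoc]]
    exact trace_S_zero S _ hDS
  have t3 : W⁻¹ * (R * (P * D)) = 0 := by
    rw [hPdef, projMat]
    simp only [Matrix.mul_assoc, hSD, Matrix.mul_zero]
  have hcross : trace (W⁻¹ * E * W⁻¹ * D) = 0 := by
    rw [hsplit, trace_add, trace_sub, t1, t2, t3, trace_zero]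
    ring
  have c2eq : trace (W⁻¹ * D * W⁻¹ * Eᵀ) = trace (W⁻¹ * E * W⁻¹ * D) := by
    rw [← trace_transpose (W⁻¹ * D * W⁻¹ * Eᵀ)]
    have hWinv : (W⁻¹)ᵀ = W⁻¹ := by rw [Matrix.transpose_nonsing_inv, hWs]
    have : (W⁻¹ * D * W⁻¹ * Eᵀ)ᵀ = E * W⁻¹ * D * W⁻¹ := by
      simp only [Matrix.transpose_mul, transpose_transpose, hDsym, hWinv, Matrix.mul_assoc]
    rw [this, trace_mul_comm]
    congr 1
    simp only [Matrix.mul_assoc]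
  have hE'decomp : E' = E + D := by rw [hDdef]; abel
  have hobj : trace (W⁻¹ * E' * W⁻¹ * E'ᵀ) =
      trace (W⁻¹ * E * W⁻¹ * Eᵀ) + trace (W⁻¹ * D * W⁻¹ * Dᵀ) := by
    rw [hE'decomp, Matrix.transpose_add]
    rw [show W⁻¹ * (E + D) * W⁻¹ * (Eᵀ + Dᵀ) =
        W⁻¹ * E * W⁻¹ * Eᵀ + W⁻¹ * E * W⁻¹ * Dᵀ + W⁻¹ * D * W⁻¹ * Eᵀ + W⁻¹ * D * W⁻¹ * Dᵀ by
      simp only [Matrix.mul_add, Matrix.add_mul]; abel]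
    rw [trace_add, trace_add, trace_add, hDsym, hcross, c2eq, hcross]
    ring
  obtain ⟨hpos, hzero⟩ := posdef_trace_key hW.inv D
  constructor
  · rw [hobj]; exact le_add_of_nonneg_right hpos
  · intro heq
    rw [hobj] at heq
    have hD0 : D = 0 := hzero (by linarith)
    rw [hE'decomp, hD0, add_zero]
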